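/- Let Q be a finite set, with Ā_q partitioned as in balanced truncation: Ā_q = [[Â_q, A_{q,12}], [A_{q,21}, A_{q,22}]] with Â_q of size r×r, C̄_q = [Ĉ_q, C_{q,2}], and Λ = diag(Λ₁, Λ₂) positive definite diagonal, Λ₁ of size r×r. If Ā_qᵀΛĀ_q + C̄_qᵀC̄_q − Λ ≤ 0 for all q ∈ Q, then Â_qᵀΛ₁Â_q + Ĉ_qᵀĈ_q − Λ₁ ≤ 0 for all q ∈ Q. -/

import Mathlib

open Matrix

/-- discrete-time balanced truncation preserves the
observability grammian inequality: with `Ā_q = [[Â_q, A₁₂], [A₂₁, A₂₂]]`,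
`C̄_q = [Ĉ_q, C₂]`, `Λ = diag(Λ₁, Λ₂)` diagonal positive definite, if
`Ā_qᵀΛĀ_q + C̄_qᵀC̄_q − Λ ≤ 0` for all `q`, then
`Â_qᵀΛ₁Â_q + Ĉ_qᵀĈ_q − Λ₁ ≤ 0` for all `q`. -/
theorem stmt14 {r s p : ℕ} {Q : Type*} [Fintype Q]
    (Ahat : Q → Matrix (Fin r) (Fin r) ℝ)
    (A12 : Q → Matrix (Fin r) (Fin s) ℝ)
    (A21 : Q → Matrix (Fin s) (Fin r) ℝ)
    (A22 : Q → Matrix (Fin s) (Fin s) ℝ)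
    (Chat : Q → Matrix (Fin p) (Fin r) ℝ)
    (C2 : Q → Matrix (Fin p) (Fin s) ℝ)
    (d₁ : Fin r → ℝ) (d₂ : Fin s → ℝ)
    (hd₁ : ∀ i, 0 < d₁ i) (hd₂ : ∀ i, 0 < d₂ i)
    (Abar : Q → Matrix (Fin r ⊕ Fin s) (Fin r ⊕ Fin s) ℝ)
    (hAbar : ∀ q, Abar q = Matrix.fromBlocks (Ahat q) (A12 q) (A21 q) (A22 q))
    (Cbar : Q → Matrix (Fin p) (Fin r ⊕ Fin s) ℝ)
    (hCbar : ∀ q, Cbar q = Matrix.fromCols (Chat q) (C2 q))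
    (Λ : Matrix (Fin r ⊕ Fin s) (Fin r ⊕ Fin s) ℝ)
    (hΛ : Λ = Matrix.fromBlocks (Matrix.diagonal d₁) 0 0 (Matrix.diagonal d₂))
    (h : ∀ q : Q, ∀ v : Fin r ⊕ Fin s → ℝ,
      v ⬝ᵥ (((Abar q)ᵀ * Λ * Abar q + (Cbar q)ᵀ * Cbar q - Λ) *ᵥ v) ≤ 0) :
    ∀ q : Q, ∀ v : Fin r → ℝ,
      v ⬝ᵥ (((Ahat q)ᵀ * Matrix.diagonal d₁ * Ahat q
        + (Chat q)ᵀ * Chat q - Matrix.diagonal d₁) *ᵥ v) ≤ 0 := by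
  intro q v
  have hA21 : 0 ≤ v ⬝ᵥ (((A21 q)ᵀ * Matrix.diagonal d₂ * A21 q) *ᵥ v) := by
    rw [← Matrix.mulVec_mulVec, ← Matrix.mulVec_mulVec, Matrix.dotProduct_mulVec,
      Matrix.vecMul_transpose]
    simp only [dotProduct, mulVec_diagonal]
    exact Finset.sum_nonneg fun j _ => by nlinarith [sq_nonneg (A21 q *ᵥ v <| j), (hd₂ j).le]
  have hq := h q (Sum.elim v 0)
  rw [hAbar, hCbar, hΛ] at hq
  have expand : (Sum.elim v 0) ⬝ᵥ
      (((fromBlocks (Ahat q) (A12 q) (A21 q) (A22 q))ᵀ *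
          fromBlocks (Matrix.diagonal d₁) 0 0 (Matrix.diagonal d₂) *
          fromBlocks (Ahat q) (A12 q) (A21 q) (A22 q) +
        ((Chat q).fromCols (C2 q))ᵀ * (Chat q).fromCols (C2 q) -
        fromBlocks (Matrix.diagonal d₁) 0 0 (Matrix.diagonal d₂)) *ᵥ (Sum.elim v 0))
      = v ⬝ᵥ (((Ahat q)ᵀ * Matrix.diagonal d₁ * Ahat q
          + (Chat q)ᵀ * Chat q - Matrix.diagonal d₁) *ᵥ v)
        + v ⬝ᵥ (((A21 q)ᵀ * Matrix.diagonal d₂ * A21 q) *ᵥ v) := by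
    simp only [fromBlocks_transpose, transpose_fromCols, fromBlocks_multiply,
      fromRows_mul_fromCols, fromBlocks_add, sub_mulVec, fromBlocks_mulVec,
      Sum.elim_comp_inl, Sum.elim_comp_inr, Matrix.mulVec_zero, add_zero,
      dotProduct_sub, sumElim_dotProduct_sumElim, dotProduct_zero,
      Matrix.add_mulVec, dotProduct_add, zero_dotProduct, Matrix.mul_zero,
      Matrix.zero_mul, zero_add, Matrix.zero_mulVec]
    ring
  rw [expand] at hq
  linarith
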